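/- Let m ≥ 1 and let F be a finite set of strings over the alphabet Fin m, each of length at least 2; for each j ≥ 2 let a_j be the number of elements of F of length j, and for each k let s_k be the number of strings of length k over Fin m that avoid F. Then for every k ≥ 0 the inequality s_{k+1} ≥ m·s_k − ∑_{j=2}^{k+1} a_j · s_{k+1−j} holds (as integers). -/

import Mathlib

open Finset

private def avoidSet {m : ℕ} (F : Finset (List (Fin m))) (n : ℕ) : Finset (List (Fin m)) :=
  ((Finset.univ : Finset (Fin n → Fin m)).image List.ofFn).filter
    (fun w => ∀ f ∈ F, ¬ f <:+: w)

private lemma mem_avoidSet {m : ℕ} {F : Finset (List (Fin m))} {n : ℕ} {w : List (Fin m)} :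
    w ∈ avoidSet F n ↔ w.length = n ∧ ∀ f ∈ F, ¬ f <:+: w := by
  simp only [avoidSet, mem_filter, mem_image, mem_univ, true_and]
  constructor
  · rintro ⟨⟨v, rfl⟩, h⟩
    exact ⟨List.length_ofFn (f := v), h⟩
  · rintro ⟨hl, h⟩
    subst hl
    exact ⟨⟨fun i => w.get i, List.ofFn_get w⟩, h⟩

private lemma card_avoid {m : ℕ} (F : Finset (List (Fin m))) (n : ℕ) :
    Nat.card {w : List (Fin m) // w.length = n ∧ ∀ f ∈ F, ¬ f <:+: w}
      = (avoidSet F n).card := by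
  rw [← Nat.card_eq_finsetCard]
  exact Nat.card_congr (Equiv.subtypeEquivRight fun w => mem_avoidSet.symm)

private lemma avoid_nat_ineq {m : ℕ} (F : Finset (List (Fin m)))
    (hF : ∀ w ∈ F, 2 ≤ w.length) (k : ℕ) :
    m * (avoidSet F k).card ≤ (avoidSet F (k + 1)).card
      + ∑ j ∈ Finset.Icc 2 (k + 1),
          (F.filter (fun w => w.length = j)).card * (avoidSet F (k + 1 - j)).card := by
  classical
  set A := avoidSet F with hA
  -- the cons image
  set B : Finset (List (Fin m)) :=
    Finset.image (fun p : Fin m × List (Fin m) => p.1 :: p.2)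
      ((Finset.univ : Finset (Fin m)) ×ˢ A k) with hB
  have hBcard : B.card = m * (A k).card := by
    rw [hB, Finset.card_image_of_injective _ (by
      rintro ⟨a, w⟩ ⟨b, v⟩ h
      simp only [List.cons.injEq] at h
      simp [h.1, h.2])]
    simp [Finset.card_product, mul_comm]
  -- bad set
  set Bad : Finset (List (Fin m)) :=
    (F.filter (fun f => f.length ≤ k + 1)).biUnion
      (fun f => (A (k + 1 - f.length)).image (fun t => f ++ t)) with hBad
  have hsub : B ⊆ A (k + 1) ∪ Bad := by
    intro u hu
    rw [hB, Finset.mem_image] at hu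
    obtain ⟨⟨a, w⟩, hp, rfl⟩ := hu
    rw [Finset.mem_product] at hp
    obtain ⟨-, hw⟩ := hp
    rw [hA, mem_avoidSet] at hw
    obtain ⟨hwl, hwav⟩ := hw
    by_cases hgood : ∀ f ∈ F, ¬ f <:+: (a :: w)
    · exact Finset.mem_union_left _ (mem_avoidSet.mpr ⟨by simp [hwl], hgood⟩)
    · push_neg at hgood
      obtain ⟨f, hfF, hfi⟩ := hgood
      rw [List.infix_cons_iff] at hfi
      rcases hfi with hfp | hfi
      · -- f is a prefix of a :: w
        obtain ⟨t, ht⟩ := hfp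
        have hlen : f.length + t.length = k + 1 := by
          have := congrArg List.length ht
          simpa [hwl] using this
        have hfle : f.length ≤ k + 1 := le_of_le_of_eq (Nat.le_add_right _ _) hlen
        have hf2 : 2 ≤ f.length := hF f hfF
        have htl : t.length = k + 1 - f.length := by omega
        have htw : t <:+ w := by
          have hsuf : t <:+ a :: w := ⟨f, ht⟩
          rw [List.suffix_cons_iff] at hsuf
          rcases hsuf with h | h
          · exfalso
            have : t.length = k + 1 := by rw [h]; simp [hwl]
            omega
          · exact h
        have htav : ∀ g ∈ F, ¬ g <:+: t := by
          intro g hg hgt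
          exact hwav g hg (hgt.trans htw.isInfix)
        refine Finset.mem_union_right _ ?_
        rw [hBad, Finset.mem_biUnion]
        refine ⟨f, Finset.mem_filter.mpr ⟨hfF, hfle⟩, ?_⟩
        rw [Finset.mem_image]
        exact ⟨t, mem_avoidSet.mpr ⟨htl, htav⟩, ht⟩
      · exact absurd hfi (hwav f hfF)
  have hBadcard : Bad.card ≤ ∑ f ∈ F.filter (fun f => f.length ≤ k + 1),
      (A (k + 1 - f.length)).card := by
    refine (Finset.card_biUnion_le).trans ?_
    exact Finset.sum_le_sum fun f _ => Finset.card_image_le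
  have hsum : ∑ f ∈ F.filter (fun f => f.length ≤ k + 1), (A (k + 1 - f.length)).card
      = ∑ j ∈ Finset.Icc 2 (k + 1),
          (F.filter (fun w => w.length = j)).card * (A (k + 1 - j)).card := by
    rw [← Finset.sum_fiberwise_of_maps_to (g := List.length)
      (t := Finset.Icc 2 (k + 1)) (fun f hf => by
        rw [Finset.mem_filter] at hf
        exact Finset.mem_Icc.mpr ⟨hF f hf.1, hf.2⟩)]
    refine Finset.sum_congr rfl fun j hj => ?_
    rw [Finset.mem_Icc] at hj
    have : (F.filter (fun f => f.length ≤ k + 1)).filter (fun f => f.length = j)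
        = F.filter (fun w => w.length = j) := by
      rw [Finset.filter_filter]
      apply Finset.filter_congr
      intro f _
      constructor
      · exact fun h => h.2
      · exact fun h => ⟨h ▸ hj.2, h⟩
    rw [this]
    have hc : ∑ f ∈ F.filter (fun w => w.length = j), (A (k + 1 - f.length)).card
        = ∑ _f ∈ F.filter (fun w => w.length = j), (A (k + 1 - j)).card :=
      Finset.sum_congr rfl fun f hf => by rw [(Finset.mem_filter.mp hf).2]
    rw [hc, Finset.sum_const, smul_eq_mul]
  calc m * (A k).card = B.card := hBcard.symm
    _ ≤ (A (k + 1) ∪ Bad).card := Finset.card_le_card hsub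
    _ ≤ (A (k + 1)).card + Bad.card := Finset.card_union_le _ _
    _ ≤ _ := by rw [← hsum]; exact Nat.add_le_add_left hBadcard _

/-- If `s_k` is the number of strings of length `k` over `Fin m` avoiding the finite
forbidden set `F` (all forbidden strings of length ≥ 2) and `a_j` the number of
forbidden strings of length `j`, then
`s_{k+1} ≥ m·s_k − ∑_{j=2}^{k+1} a_j · s_{k+1−j}` as integers. -/
theorem avoiding_count_recurrence (m : ℕ) (hm : 1 ≤ m)
    (F : Finset (List (Fin m))) (hF : ∀ w ∈ F, 2 ≤ w.length) (k : ℕ) :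
    (m : ℤ) * Nat.card {w : List (Fin m) // w.length = k ∧ ∀ f ∈ F, ¬ f <:+: w}
      - ∑ j ∈ Finset.Icc 2 (k + 1),
          ((F.filter (fun w => w.length = j)).card : ℤ) *
            Nat.card {w : List (Fin m) // w.length = k + 1 - j ∧ ∀ f ∈ F, ¬ f <:+: w}
      ≤ (Nat.card {w : List (Fin m) // w.length = k + 1 ∧ ∀ f ∈ F, ¬ f <:+: w} : ℤ) := by
  have h := avoid_nat_ineq F hF k
  simp only [card_avoid]
  have := (Nat.cast_le (α := ℤ)).mpr h
  push_cast at this ⊢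
  linarith
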